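/- Let (u_s, v_s) be C¹ on the closure of Ω with ∂_x u_s + ∂_y v_s = 0 in Ω and v_s = 0 on {y = 0} ∪ {y = 2}. Let (u,v) be C¹ on the closure of Ω with u = v = 0 on {x = 0} ∪ {y = 0} ∪ {y = 2}. Then ∫_Ω ( u_s ∂_x u + (∂_x u_s) u + v_s ∂_y u ) u = ∫_Ω (∂_x u_s) u² + (1/2) ∫₀² u_s(L,y) u(L,y)² dy, and ∫_Ω ( u_s ∂_x v + v_s ∂_y v + (∂_y v_s) v ) v = ∫_Ω (∂_y v_s) v² + (1/2) ∫₀² u_s(L,y) v(L,y)² dy. -/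

import Mathlib

open MeasureTheory Set Real Function

noncomputable section

/-- The channel domain `Ω = (0,L) × (0,2)`. -/
def Omg (L : ℝ) : Set (ℝ × ℝ) := Ioo (0:ℝ) L ×ˢ Ioo (0:ℝ) 2

/-- Partial derivative in the first (x) variable of a curried function. -/
def pdx (f : ℝ → ℝ → ℝ) : ℝ → ℝ → ℝ := fun x y => deriv (fun s => f s y) x

/-- Partial derivative in the second (y) variable of a curried function. -/
def pdy (f : ℝ → ℝ → ℝ) : ℝ → ℝ → ℝ := fun x y => deriv (fun t => f x t) y

/-- Laplacian `Δ = ∂ₓₓ + ∂_{yy}`. -/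
def plap (f : ℝ → ℝ → ℝ) : ℝ → ℝ → ℝ := fun x y => pdx (pdx f) x y + pdy (pdy f) x y

/-- Integral over `Ω`. -/
def intO (L : ℝ) (F : ℝ → ℝ → ℝ) : ℝ := ∫ p in Omg L, F p.1 p.2

/-- `L²(Ω)` norm. -/
def l2 (L : ℝ) (f : ℝ → ℝ → ℝ) : ℝ := Real.sqrt (intO L fun x y => (f x y)^2)

/-- `L^∞(Ω)` (sup) norm. -/
def supO (L : ℝ) (f : ℝ → ℝ → ℝ) : ℝ := sSup ((fun p : ℝ × ℝ => |f p.1 p.2|) '' Omg L)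

/-- `|∇f|²`. -/
def gradSq (f : ℝ → ℝ → ℝ) (x y : ℝ) : ℝ := (pdx f x y)^2 + (pdy f x y)^2

/-- Energy norm `‖u,v‖_E = ‖√ε ∇u‖_{L²(Ω)} + ‖√ε ∇v‖_{L²(Ω)}`. -/
def normE (ε L : ℝ) (u v : ℝ → ℝ → ℝ) : ℝ :=
  Real.sqrt (intO L fun x y => ε * gradSq u x y) + Real.sqrt (intO L fun x y => ε * gradSq v x y)

/-- Positivity norm `‖u,v‖_P = ‖√(u_s) ∇v‖_{L²(Ω)}`. -/
def normP (L : ℝ) (us v : ℝ → ℝ → ℝ) : ℝ :=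
  Real.sqrt (intO L fun x y => us x y * gradSq v x y)

/-- The `X` norm `‖u,v‖_X = ‖u,v‖_E + ε^{γ/2}(‖√ε u‖_∞ + ‖√ε v‖_∞)`. -/
def normX (ε γ L : ℝ) (u v : ℝ → ℝ → ℝ) : ℝ :=
  normE ε L u v + ε ^ (γ/2) *
    (supO L (fun x y => Real.sqrt ε * u x y) + supO L (fun x y => Real.sqrt ε * v x y))

/-- Linearized convection term `S_u`. -/
def Su (us vs u v : ℝ → ℝ → ℝ) (x y : ℝ) : ℝ :=
  us x y * pdx u x y + pdx us x y * u x y + pdy us x y * v x y + vs x y * pdy u x y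

/-- Linearized convection term `S_v`. -/
def Sv (us vs u v : ℝ → ℝ → ℝ) (x y : ℝ) : ℝ :=
  us x y * pdx v x y + pdx vs x y * u x y + vs x y * pdy v x y + pdy vs x y * v x y

/-- The `W^{100,∞}` norm of a function on `(0,2)`. -/
def W100 (h : ℝ → ℝ) : ℝ :=
  sSup { r : ℝ | ∃ j ≤ 100, ∃ y ∈ Ioo (0:ℝ) 2, r = |deriv^[j] h y| }

section AuxLemmas

open Function MeasureTheory Set

lemma pdx_eq {f : ℝ → ℝ → ℝ} (hf : ContDiff ℝ 1 (uncurry f)) (x y : ℝ) :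
    pdx f x y = fderiv ℝ (uncurry f) (x, y) (1, 0) := by
  have h1 : HasDerivAt (fun s : ℝ => ((s, y) : ℝ × ℝ)) ((1 : ℝ), (0 : ℝ)) x :=
    (hasDerivAt_id x).prodMk (hasDerivAt_const x y)
  have h2 : HasFDerivAt (uncurry f) (fderiv ℝ (uncurry f) (x, y)) (x, y) :=
    (hf.differentiable one_ne_zero (x, y)).hasFDerivAt
  exact (h2.comp_hasDerivAt x h1).deriv

lemma pdy_eq {f : ℝ → ℝ → ℝ} (hf : ContDiff ℝ 1 (uncurry f)) (x y : ℝ) :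
    pdy f x y = fderiv ℝ (uncurry f) (x, y) (0, 1) := by
  have h1 : HasDerivAt (fun t : ℝ => ((x, t) : ℝ × ℝ)) ((0 : ℝ), (1 : ℝ)) y :=
    (hasDerivAt_const y x).prodMk (hasDerivAt_id y)
  have h2 : HasFDerivAt (uncurry f) (fderiv ℝ (uncurry f) (x, y)) (x, y) :=
    (hf.differentiable one_ne_zero (x, y)).hasFDerivAt
  exact (h2.comp_hasDerivAt y h1).deriv

lemma cont_pdx {f : ℝ → ℝ → ℝ} (hf : ContDiff ℝ 1 (uncurry f)) :
    Continuous fun p : ℝ × ℝ => pdx f p.1 p.2 :=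
  (((hf.continuous_fderiv one_ne_zero).clm_apply continuous_const).congr
    fun p => (pdx_eq hf p.1 p.2).symm)

lemma cont_pdy {f : ℝ → ℝ → ℝ} (hf : ContDiff ℝ 1 (uncurry f)) :
    Continuous fun p : ℝ × ℝ => pdy f p.1 p.2 :=
  (((hf.continuous_fderiv one_ne_zero).clm_apply continuous_const).congr
    fun p => (pdy_eq hf p.1 p.2).symm)

/-- The flux `a * w ^ 2`. -/
def Fp (a w : ℝ → ℝ → ℝ) : ℝ × ℝ → ℝ := fun p => a p.1 p.2 * w p.1 p.2 ^ 2

/-- Its total derivative. -/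
def Fp' (a w : ℝ → ℝ → ℝ) : ℝ × ℝ → ℝ × ℝ →L[ℝ] ℝ := fun p =>
  (2 * a p.1 p.2 * w p.1 p.2) • fderiv ℝ (uncurry w) p + w p.1 p.2 ^ 2 • fderiv ℝ (uncurry a) p

lemma hasFDerivAt_Fp {a w : ℝ → ℝ → ℝ} (ha : ContDiff ℝ 1 (uncurry a))
    (hw : ContDiff ℝ 1 (uncurry w)) (p : ℝ × ℝ) :
    HasFDerivAt (Fp a w) (Fp' a w p) p := by
  have hap : HasFDerivAt (uncurry a) (fderiv ℝ (uncurry a) p) p :=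
    (ha.differentiable one_ne_zero p).hasFDerivAt
  have hwp : HasFDerivAt (uncurry w) (fderiv ℝ (uncurry w) p) p :=
    (hw.differentiable one_ne_zero p).hasFDerivAt
  have h := hap.mul (hwp.mul hwp)
  have heq : (fun q : ℝ × ℝ => uncurry a q * (uncurry w q * uncurry w q)) = Fp a w := by
    funext q; simp only [Fp, uncurry]; ring
  rw [show (uncurry a * (uncurry w * uncurry w)) = Fp a w from heq] at h
  refine h.congr_fderiv ?_
  refine ContinuousLinearMap.ext fun v => ?_
  simp only [Fp', ContinuousLinearMap.add_apply, ContinuousLinearMap.coe_smul',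
    Pi.smul_apply, smul_eq_mul, Pi.mul_apply, uncurry]
  ring

lemma cont_Fp {a w : ℝ → ℝ → ℝ} (ha : ContDiff ℝ 1 (uncurry a))
    (hw : ContDiff ℝ 1 (uncurry w)) : Continuous (Fp a w) :=
  ha.continuous.mul (hw.continuous.pow 2)

lemma cont_Fp'_apply {a w : ℝ → ℝ → ℝ} (ha : ContDiff ℝ 1 (uncurry a))
    (hw : ContDiff ℝ 1 (uncurry w)) (c : ℝ × ℝ) :
    Continuous fun p => Fp' a w p c := by
  have h1 : Continuous fun p : ℝ × ℝ => (fderiv ℝ (uncurry w) p) c :=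
    (hw.continuous_fderiv one_ne_zero).clm_apply continuous_const
  have h2 : Continuous fun p : ℝ × ℝ => (fderiv ℝ (uncurry a) p) c :=
    (ha.continuous_fderiv one_ne_zero).clm_apply continuous_const
  simp only [Fp', ContinuousLinearMap.add_apply, ContinuousLinearMap.coe_smul',
    Pi.smul_apply, smul_eq_mul]
  exact (((continuous_const.mul ha.continuous).mul hw.continuous).mul h1).add
    ((hw.continuous.pow 2).mul h2)

lemma integrableOn_Omg {L : ℝ} {f : ℝ × ℝ → ℝ} (hf : Continuous f) :
    IntegrableOn f (Omg L) := by
  have h : IntegrableOn f (Icc (0:ℝ) L ×ˢ Icc (0:ℝ) 2) :=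
    hf.continuousOn.integrableOn_compact (isCompact_Icc.prod isCompact_Icc)
  exact h.mono_set (Set.prod_mono Ioo_subset_Icc_self Ioo_subset_Icc_self)

lemma key_ibp (L : ℝ) (hL0 : 0 < L)
    (us vs w : ℝ → ℝ → ℝ)
    (hus : ContDiff ℝ 1 (uncurry us)) (hvs : ContDiff ℝ 1 (uncurry vs))
    (hdivs : ∀ p ∈ Omg L, pdx us p.1 p.2 + pdy vs p.1 p.2 = 0)
    (hvs0 : ∀ x ∈ Icc (0:ℝ) L, vs x 0 = 0 ∧ vs x 2 = 0)
    (hw : ContDiff ℝ 1 (uncurry w))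
    (hw0 : ∀ y ∈ Icc (0:ℝ) 2, w 0 y = 0)
    (hwy : ∀ x ∈ Icc (0:ℝ) L, w x 0 = 0 ∧ w x 2 = 0) :
    intO L (fun x y => (us x y * pdx w x y + vs x y * pdy w x y) * w x y)
      = (1/2) * ∫ y in Ioo (0:ℝ) 2, us L y * (w L y)^2 := by
  have h02 : (0:ℝ) ≤ 2 := by norm_num
  set div : ℝ × ℝ → ℝ := fun p => Fp' us w p (1, 0) + Fp' vs w p (0, 1) with hdiv_def
  have hdivcont : Continuous div :=
    (cont_Fp'_apply hus hw _).add (cont_Fp'_apply hvs hw _)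
  -- divergence theorem
  have hDiv := integral2_divergence_prod_of_hasFDerivAt_off_countable
    (Fp us w) (Fp vs w) (Fp' us w) (Fp' vs w) 0 0 L 2 ∅ countable_empty
    (cont_Fp hus hw).continuousOn (cont_Fp hvs hw).continuousOn
    (fun p _ => hasFDerivAt_Fp hus hw p) (fun p _ => hasFDerivAt_Fp hvs hw p)
    (hdivcont.continuousOn.integrableOn_compact (isCompact_uIcc.prod isCompact_uIcc))
  -- boundary terms
  have hGtop : (∫ x in (0:ℝ)..L, Fp vs w (x, 2)) = 0 := by
    rw [intervalIntegral.integral_congr (g := fun _ => (0:ℝ))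
      (fun x hx => by
        have hx' : x ∈ Icc (0:ℝ) L := by rwa [uIcc_of_le hL0.le] at hx
        simp [Fp, (hvs0 x hx').2]),
      intervalIntegral.integral_const]
    simp
  have hGbot : (∫ x in (0:ℝ)..L, Fp vs w (x, 0)) = 0 := by
    rw [intervalIntegral.integral_congr (g := fun _ => (0:ℝ))
      (fun x hx => by
        have hx' : x ∈ Icc (0:ℝ) L := by rwa [uIcc_of_le hL0.le] at hx
        simp [Fp, (hvs0 x hx').1]),
      intervalIntegral.integral_const]
    simp
  have hFleft : (∫ y in (0:ℝ)..2, Fp us w (0, y)) = 0 := by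
    rw [intervalIntegral.integral_congr (g := fun _ => (0:ℝ))
      (fun y hy => by
        have hy' : y ∈ Icc (0:ℝ) 2 := by rwa [uIcc_of_le h02] at hy
        simp [Fp, hw0 y hy']),
      intervalIntegral.integral_const]
    simp
  rw [hGtop, hGbot, hFleft] at hDiv
  -- convert the set integral over Ω to the iterated interval integral
  have hint : IntegrableOn div (Omg L) := integrableOn_Omg hdivcont
  have hOmg_eq : (∫ p in Omg L, div p) = ∫ x in (0:ℝ)..L, ∫ y in (0:ℝ)..2, div (x, y) := by
    rw [show (volume : Measure (ℝ × ℝ)) = (volume : Measure ℝ).prod volume from rfl] at hint ⊢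
    rw [Omg] at hint ⊢
    rw [setIntegral_prod _ hint]
    rw [intervalIntegral.integral_of_le hL0.le,
      setIntegral_congr_set (Ioo_ae_eq_Ioc (a := (0:ℝ)) (b := L)).symm]
    refine setIntegral_congr_fun measurableSet_Ioo fun x _ => ?_
    rw [intervalIntegral.integral_of_le h02,
      setIntegral_congr_set (Ioo_ae_eq_Ioc (a := (0:ℝ)) (b := 2)).symm]
  -- pointwise identity on Ω
  have hpt : ∀ p ∈ Omg L,
      (us p.1 p.2 * pdx w p.1 p.2 + vs p.1 p.2 * pdy w p.1 p.2) * w p.1 p.2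
        = (1/2) * div p := by
    intro p hp
    have h0 := hdivs p hp
    rw [pdx_eq hus p.1 p.2, pdy_eq hvs p.1 p.2] at h0
    simp only [hdiv_def, Fp', ContinuousLinearMap.add_apply, ContinuousLinearMap.coe_smul',
      Pi.smul_apply, smul_eq_mul]
    rw [pdx_eq hw p.1 p.2, pdy_eq hw p.1 p.2]
    linear_combination (-(w p.1 p.2 ^ 2) / 2) * h0
  -- assemble
  have hmeas : MeasurableSet (Omg L) := measurableSet_Ioo.prod measurableSet_Ioo
  calc intO L (fun x y => (us x y * pdx w x y + vs x y * pdy w x y) * w x y)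
      = ∫ p in Omg L, (1/2) * div p := setIntegral_congr_fun hmeas fun p hp => hpt p hp
    _ = (1/2) * ∫ p in Omg L, div p := integral_const_mul _ _
    _ = (1/2) * ∫ y in (0:ℝ)..2, Fp us w (L, y) := by rw [hOmg_eq, hDiv]; ring_nf
    _ = (1/2) * ∫ y in Ioo (0:ℝ) 2, us L y * (w L y)^2 := by
        rw [intervalIntegral.integral_of_le h02,
          setIntegral_congr_set (Ioo_ae_eq_Ioc (a := (0:ℝ)) (b := 2)).symm]
        rfl

lemma intO_add {L : ℝ} (f g : ℝ → ℝ → ℝ)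
    (hf : IntegrableOn (fun p : ℝ × ℝ => f p.1 p.2) (Omg L))
    (hg : IntegrableOn (fun p : ℝ × ℝ => g p.1 p.2) (Omg L)) :
    intO L (fun x y => f x y + g x y) = intO L f + intO L g :=
  integral_add hf hg

end AuxLemmas

set_option maxHeartbeats 1000000 in
/-- identities for the convection terms. -/
theorem stmt14 (L : ℝ) (hL0 : 0 < L) (hL1 : L ≤ 1)
    (us vs u v : ℝ → ℝ → ℝ)
    (hus : ContDiff ℝ 1 (uncurry us)) (hvs : ContDiff ℝ 1 (uncurry vs))
    (hdivs : ∀ p ∈ Omg L, pdx us p.1 p.2 + pdy vs p.1 p.2 = 0)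
    (hvs0 : ∀ x ∈ Icc (0:ℝ) L, vs x 0 = 0 ∧ vs x 2 = 0)
    (hu : ContDiff ℝ 1 (uncurry u)) (hv : ContDiff ℝ 1 (uncurry v))
    (hbcx0 : ∀ y ∈ Icc (0:ℝ) 2, u 0 y = 0 ∧ v 0 y = 0)
    (hbcy : ∀ x ∈ Icc (0:ℝ) L, u x 0 = 0 ∧ v x 0 = 0 ∧ u x 2 = 0 ∧ v x 2 = 0) :
    (intO L (fun x y => (us x y * pdx u x y + pdx us x y * u x y + vs x y * pdy u x y) * u x y)
      = intO L (fun x y => pdx us x y * (u x y)^2)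
        + (1/2) * ∫ y in Ioo (0:ℝ) 2, us L y * (u L y)^2) ∧
    (intO L (fun x y => (us x y * pdx v x y + vs x y * pdy v x y + pdy vs x y * v x y) * v x y)
      = intO L (fun x y => pdy vs x y * (v x y)^2)
        + (1/2) * ∫ y in Ioo (0:ℝ) 2, us L y * (v L y)^2) := by
  have key := key_ibp L hL0 us vs
  have hucont := hu.continuous
  have hvcont := hv.continuous
  constructor
  · have hrw : (fun x y => (us x y * pdx u x y + pdx us x y * u x y + vs x y * pdy u x y) * u x y)
        = fun x y => (us x y * pdx u x y + vs x y * pdy u x y) * u x y + pdx us x y * (u x y)^2 := by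
      funext x y; ring
    have h1 : Continuous (fun p : ℝ × ℝ => us p.1 p.2) := hus.continuous
    have h2 : Continuous (fun p : ℝ × ℝ => vs p.1 p.2) := hvs.continuous
    have h3 : Continuous (fun p : ℝ × ℝ => u p.1 p.2) := hucont
    have hcA : Continuous
        (fun p : ℝ × ℝ => (us p.1 p.2 * pdx u p.1 p.2 + vs p.1 p.2 * pdy u p.1 p.2) * u p.1 p.2) :=
      ((h1.mul (cont_pdx hu)).add (h2.mul (cont_pdy hu))).mul h3
    have hcB : Continuous (fun p : ℝ × ℝ => pdx us p.1 p.2 * (u p.1 p.2)^2) :=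
      (cont_pdx hus).mul (h3.pow 2)
    have hA := integrableOn_Omg (L := L) hcA
    have hB := integrableOn_Omg (L := L) hcB
    rw [hrw, intO_add (fun x y => (us x y * pdx u x y + vs x y * pdy u x y) * u x y)
      (fun x y => pdx us x y * (u x y)^2) hA hB,
      key u hus hvs hdivs hvs0 hu (fun y hy => (hbcx0 y hy).1)
        (fun x hx => ⟨(hbcy x hx).1, (hbcy x hx).2.2.1⟩)]
    ring
  · have hrw : (fun x y => (us x y * pdx v x y + vs x y * pdy v x y + pdy vs x y * v x y) * v x y)
        = fun x y => (us x y * pdx v x y + vs x y * pdy v x y) * v x y + pdy vs x y * (v x y)^2 := by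
      funext x y; ring
    have h1 : Continuous (fun p : ℝ × ℝ => us p.1 p.2) := hus.continuous
    have h2 : Continuous (fun p : ℝ × ℝ => vs p.1 p.2) := hvs.continuous
    have h3 : Continuous (fun p : ℝ × ℝ => v p.1 p.2) := hvcont
    have hcA : Continuous
        (fun p : ℝ × ℝ => (us p.1 p.2 * pdx v p.1 p.2 + vs p.1 p.2 * pdy v p.1 p.2) * v p.1 p.2) :=
      ((h1.mul (cont_pdx hv)).add (h2.mul (cont_pdy hv))).mul h3
    have hcB : Continuous (fun p : ℝ × ℝ => pdy vs p.1 p.2 * (v p.1 p.2)^2) :=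
      (cont_pdy hvs).mul (h3.pow 2)
    have hA := integrableOn_Omg (L := L) hcA
    have hB := integrableOn_Omg (L := L) hcB
    rw [hrw, intO_add (fun x y => (us x y * pdx v x y + vs x y * pdy v x y) * v x y)
      (fun x y => pdy vs x y * (v x y)^2) hA hB,
      key v hus hvs hdivs hvs0 hv (fun y hy => (hbcx0 y hy).2)
        (fun x hx => ⟨(hbcy x hx).2.1, (hbcy x hx).2.2.2⟩)]
    ring
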